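/- Fix l > 0 and a rational p/q with q ≥ 1, and let tr_{p/q}(l, τ) = Σ_{k=-q}^{q} c_k exp(kτ/2) with real coefficients c_k and c_{±q} ≠ 0. Then there exists T > 0 such that for all real t with |t| > T and every integer j with |j| < q/2, there exists b ∈ ((2j-1)π/q, (2j+1)π/q) with Im(tr_{p/q}(l, t + b√-1)) = 0. -/

import Mathlib

open Complex Finset

private lemma sum_neg_icc (q : ℤ) (f : ℤ → ℝ) :
    ∑ k ∈ Icc (-q) q, f (-k) = ∑ k ∈ Icc (-q) q, f k := by
  apply Finset.sum_nbij' (fun k => -k) (fun k => -k) <;> intros <;>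
    simp_all [Finset.mem_Icc] <;> omega

private lemma cos_int_pi (n : ℤ) : Real.cos (n * Real.pi) = (-1) ^ n := by
  simpa using Real.cos_int_mul_pi_sub 0 n

private lemma sin_top (q : ℤ) (hq : q ≠ 0) (j : ℤ) :
    Real.sin ((q : ℝ) * ((2 * (j:ℝ) + 1) * Real.pi / (q:ℝ)) / 2) = (-1) ^ j := by
  have hq' : (q : ℝ) ≠ 0 := Int.cast_ne_zero.mpr hq
  have h : (q : ℝ) * ((2 * (j:ℝ) + 1) * Real.pi / (q:ℝ)) / 2
      = (j:ℝ) * Real.pi + Real.pi / 2 := by field_simp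
  rw [h, Real.sin_add, Real.sin_pi_div_two, Real.cos_pi_div_two, Real.sin_int_mul_pi,
    cos_int_pi]
  ring

private lemma sin_bot (q : ℤ) (hq : q ≠ 0) (j : ℤ) :
    Real.sin ((q : ℝ) * ((2 * (j:ℝ) - 1) * Real.pi / (q:ℝ)) / 2) = -(-1) ^ j := by
  have hq' : (q : ℝ) ≠ 0 := Int.cast_ne_zero.mpr hq
  have h : (q : ℝ) * ((2 * (j:ℝ) - 1) * Real.pi / (q:ℝ)) / 2
      = (j:ℝ) * Real.pi - Real.pi / 2 := by field_simp
  rw [h, Real.sin_sub, Real.sin_pi_div_two, Real.cos_pi_div_two, Real.sin_int_mul_pi,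
    cos_int_pi]
  ring

private lemma sign_prod {d e₁ e₂ : ℝ} (h₁ : |e₁| < |d|) (h₂ : |e₂| < |d|) :
    (-d + e₁) * (d + e₂) < 0 := by
  rcases abs_cases d with ⟨hd, hd0⟩ | ⟨hd, hd0⟩ <;> rw [hd] at h₁ h₂ <;>
    rcases abs_lt.mp h₁ with ⟨a1, a2⟩ <;> rcases abs_lt.mp h₂ with ⟨b1, b2⟩ <;> nlinarith

private lemma ivt_zero (f : ℝ → ℝ) (a b : ℝ) (hab : a < b) (hf : Continuous f)
    (h : f a * f b < 0) : ∃ x, x ∈ Set.Ioo a b ∧ f x = 0 := by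
  rcases mul_neg_iff.mp h with ⟨ha, hb⟩ | ⟨ha, hb⟩
  · obtain ⟨x, hx, hfx⟩ := intermediate_value_Ioo' hab.le hf.continuousOn
      (Set.mem_Ioo.mpr ⟨hb, ha⟩)
    exact ⟨x, hx, hfx⟩
  · obtain ⟨x, hx, hfx⟩ := intermediate_value_Ioo hab.le hf.continuousOn
      (Set.mem_Ioo.mpr ⟨ha, hb⟩)
    exact ⟨x, hx, hfx⟩

private noncomputable def gsum (q : ℤ) (c : ℤ → ℝ) (t b : ℝ) : ℝ :=
  ∑ k ∈ Icc (-q) q, c k * Real.exp ((k:ℝ) * t / 2) * Real.sin ((k:ℝ) * b / 2)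

private lemma gsum_cont (q : ℤ) (c : ℤ → ℝ) (t : ℝ) : Continuous (gsum q c t) := by
  unfold gsum
  exact continuous_finset_sum _ fun k _ => by fun_prop

private lemma im_eq (q : ℤ) (c : ℤ → ℝ) (F : ℂ → ℂ)
    (hF : ∀ τ : ℂ, F τ = ∑ k ∈ Finset.Icc (-q) q, (c k : ℂ) * Complex.exp (k * τ / 2))
    (t b : ℝ) : (F (t + b * Complex.I)).im = gsum q c t b := by
  rw [hF, Complex.im_sum]
  apply Finset.sum_congr rfl
  intro k _
  have h : (k:ℂ) * (↑t + ↑b * I) / 2 = ↑((k:ℝ) * t / 2) + ↑((k:ℝ) * b / 2) * I := by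
    push_cast; ring
  rw [h]
  simp [Complex.exp_im, Complex.exp_re]
  ring

private lemma pos_side (q : ℤ) (hq : 1 ≤ q) (c : ℤ → ℝ) (hcq : c q ≠ 0)
    (t : ℝ) (ht0 : 0 < t)
    (ht : (∑ k ∈ Icc (-q) q, |c k|) < |c q| * Real.exp (t / 2)) (j : ℤ) :
    ∃ b : ℝ, (2 * (j:ℝ) - 1) * Real.pi / q < b ∧ b < (2 * (j:ℝ) + 1) * Real.pi / q ∧
      gsum q c t b = 0 := by
  have hqR : (0:ℝ) < (q:ℝ) := by exact_mod_cast hq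
  set a₁ := (2 * (j:ℝ) - 1) * Real.pi / (q:ℝ) with ha₁
  set a₂ := (2 * (j:ℝ) + 1) * Real.pi / (q:ℝ) with ha₂
  have hab : a₁ < a₂ := by
    rw [ha₁, ha₂]
    gcongr
    all_goals nlinarith [Real.pi_pos]
  have hqne : q ≠ 0 := by omega
  set S := ∑ k ∈ Icc (-q) q, |c k| with hS
  have hins : Icc (-q) q = insert q (Icc (-q) (q - 1)) := by
    ext k; simp [Finset.mem_Icc]; omega
  have hnot : q ∉ Icc (-q) (q - 1) := by simp
  set E : ℝ → ℝ := fun b => ∑ k ∈ Icc (-q) (q - 1),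
    c k * Real.exp ((k:ℝ) * t / 2) * Real.sin ((k:ℝ) * b / 2) with hE
  have hsplit : ∀ b : ℝ, gsum q c t b
      = c q * Real.exp ((q:ℝ) * t / 2) * Real.sin ((q:ℝ) * b / 2) + E b := by
    intro b
    rw [gsum, hins, Finset.sum_insert hnot, hE]
  have hEb : ∀ b : ℝ, |E b| ≤ S * Real.exp (((q:ℝ) - 1) * t / 2) := by
    intro b
    have step1 : |E b| ≤ ∑ k ∈ Icc (-q) (q - 1),
        |c k * Real.exp ((k:ℝ) * t / 2) * Real.sin ((k:ℝ) * b / 2)| :=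
      Finset.abs_sum_le_sum_abs _ _
    have step2 : ∑ k ∈ Icc (-q) (q - 1),
        |c k * Real.exp ((k:ℝ) * t / 2) * Real.sin ((k:ℝ) * b / 2)|
        ≤ ∑ k ∈ Icc (-q) (q - 1), |c k| * Real.exp (((q:ℝ) - 1) * t / 2) := by
      apply Finset.sum_le_sum
      intro k hk
      have hk1 : (k:ℝ) ≤ (q:ℝ) - 1 := by
        have := (Finset.mem_Icc.mp hk).2
        have : (k:ℝ) ≤ ((q - 1 : ℤ) : ℝ) := by exact_mod_cast this
        push_cast at this; linarith
      have h1 : Real.exp ((k:ℝ) * t / 2) ≤ Real.exp (((q:ℝ) - 1) * t / 2) :=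
        Real.exp_le_exp.mpr (by nlinarith)
      have h2 : |Real.sin ((k:ℝ) * b / 2)| ≤ 1 := Real.abs_sin_le_one _
      rw [abs_mul, abs_mul, abs_of_pos (Real.exp_pos _)]
      have h3 : |c k| * Real.exp ((k:ℝ) * t / 2) * |Real.sin ((k:ℝ) * b / 2)|
          ≤ |c k| * Real.exp ((k:ℝ) * t / 2) * 1 := by
        apply mul_le_mul_of_nonneg_left h2
        positivity
      nlinarith [abs_nonneg (c k), Real.exp_pos ((k:ℝ) * t / 2)]
    have step3 : ∑ k ∈ Icc (-q) (q - 1), |c k| * Real.exp (((q:ℝ) - 1) * t / 2)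
        ≤ S * Real.exp (((q:ℝ) - 1) * t / 2) := by
      rw [← Finset.sum_mul]
      apply mul_le_mul_of_nonneg_right ?_ (Real.exp_pos _).le
      apply Finset.sum_le_sum_of_subset_of_nonneg
      · intro k hk
        simp only [Finset.mem_Icc] at *
        omega
      · intro k _ _
        exact abs_nonneg _
    linarith
  have hdom : S * Real.exp (((q:ℝ) - 1) * t / 2) < |c q| * Real.exp ((q:ℝ) * t / 2) := by
    have h2 : |c q| * Real.exp (t / 2) * Real.exp (((q:ℝ) - 1) * t / 2)
        = |c q| * Real.exp ((q:ℝ) * t / 2) := by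
      rw [mul_assoc, ← Real.exp_add]
      ring_nf
    calc S * Real.exp (((q:ℝ) - 1) * t / 2)
        < |c q| * Real.exp (t / 2) * Real.exp (((q:ℝ) - 1) * t / 2) :=
          mul_lt_mul_of_pos_right ht (Real.exp_pos _)
      _ = |c q| * Real.exp ((q:ℝ) * t / 2) := h2
  set D := c q * Real.exp ((q:ℝ) * t / 2) * (-1 : ℝ) ^ j with hD
  have habs1 : |((-1:ℝ)) ^ j| = 1 := by
    rcases Int.even_or_odd j with h | h
    · rw [h.neg_one_zpow]; simp
    · rw [h.neg_one_zpow]; simp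
  have hDabs : |D| = |c q| * Real.exp ((q:ℝ) * t / 2) := by
    rw [hD, abs_mul, abs_mul, habs1, abs_of_pos (Real.exp_pos _), mul_one]
  have hv₂ : gsum q c t a₂ = D + E a₂ := by
    rw [hsplit a₂, ha₂, sin_top q hqne j, hD]
  have hv₁ : gsum q c t a₁ = -D + E a₁ := by
    rw [hsplit a₁, ha₁, sin_bot q hqne j, hD]
    ring
  have hlt₁ : |E a₁| < |D| := by rw [hDabs]; exact lt_of_le_of_lt (hEb a₁) hdom
  have hlt₂ : |E a₂| < |D| := by rw [hDabs]; exact lt_of_le_of_lt (hEb a₂) hdom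
  have hprod : gsum q c t a₁ * gsum q c t a₂ < 0 := by
    rw [hv₁, hv₂]
    exact sign_prod hlt₁ hlt₂
  obtain ⟨b, hb, hb0⟩ := ivt_zero (gsum q c t) a₁ a₂ hab (gsum_cont q c t) hprod
  exact ⟨b, hb.1, hb.2, hb0⟩

theorem real_locus_at_large_real_part
    (l : ℝ) (hl : 0 < l) (q : ℤ) (hq : 1 ≤ q)
    (c : ℤ → ℝ) (hcq : c q ≠ 0) (hcmq : c (-q) ≠ 0)
    (F : ℂ → ℂ)
    (hF : ∀ τ : ℂ, F τ = ∑ k ∈ Finset.Icc (-q) q, (c k : ℂ) * Complex.exp (k * τ / 2)) :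
    ∃ T > 0, ∀ t : ℝ, T < |t| → ∀ j : ℤ, 2 * |j| < q →
      ∃ b : ℝ, (2 * j - 1) * Real.pi / q < b ∧ b < (2 * j + 1) * Real.pi / q ∧
        (F (t + b * Complex.I)).im = 0 := by
  set S := ∑ k ∈ Icc (-q) q, |c k| with hS
  set m := min |c q| |c (-q)| with hm
  have hm0 : 0 < m := lt_min (abs_pos.mpr hcq) (abs_pos.mpr hcmq)
  refine ⟨max 1 (2 * Real.log (S / m + 1)), lt_of_lt_of_le one_pos (le_max_left _ _), ?_⟩
  intro t ht j _
  have hS0 : 0 ≤ S := Finset.sum_nonneg fun k _ => abs_nonneg _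
  have key : S < m * Real.exp (|t| / 2) := by
    have h1 : 2 * Real.log (S / m + 1) < |t| := lt_of_le_of_lt (le_max_right _ _) ht
    have h3 : S / m + 1 < Real.exp (|t| / 2) := by
      calc S / m + 1 = Real.exp (Real.log (S / m + 1)) :=
            (Real.exp_log (by positivity)).symm
        _ < Real.exp (|t| / 2) := Real.exp_lt_exp.mpr (by linarith)
    have h4 : S / m < Real.exp (|t| / 2) := by linarith
    calc S = S / m * m := by field_simp
      _ < Real.exp (|t| / 2) * m := mul_lt_mul_of_pos_right h4 hm0
      _ = m * Real.exp (|t| / 2) := mul_comm _ _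
  have ht1 : (1:ℝ) < |t| := lt_of_le_of_lt (le_max_left _ _) ht
  rcases lt_trichotomy t 0 with hneg | h0 | hpos
  · -- negative t : reflect
    set c' : ℤ → ℝ := fun k => c (-k) with hc'
    have hc'q : c' q ≠ 0 := by simpa [hc'] using hcmq
    have hS' : (∑ k ∈ Icc (-q) q, |c' k|) = S := by
      rw [hS, hc']
      exact sum_neg_icc q fun k => |c k|
    have htcond : (∑ k ∈ Icc (-q) q, |c' k|) < |c' q| * Real.exp (-t / 2) := by
      rw [hS']
      have hmle : m ≤ |c' q| := by simp [hc', hm]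
      have habs : |t| = -t := abs_of_neg hneg
      calc S < m * Real.exp (|t| / 2) := key
        _ ≤ |c' q| * Real.exp (|t| / 2) :=
            mul_le_mul_of_nonneg_right hmle (Real.exp_pos _).le
        _ = |c' q| * Real.exp (-t / 2) := by rw [habs]
    obtain ⟨b, hb1, hb2, hb0⟩ := pos_side q hq c' hc'q (-t) (by linarith) htcond j
    refine ⟨b, hb1, hb2, ?_⟩
    rw [im_eq q c F hF t b]
    have refl_eq : gsum q c t b = -gsum q c' (-t) b := by
      unfold gsum
      rw [← sum_neg_icc q (fun k => c k * Real.exp ((k:ℝ) * t / 2) * Real.sin ((k:ℝ) * b / 2)),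
        ← Finset.sum_neg_distrib]
      apply Finset.sum_congr rfl
      intro k _
      rw [hc']
      push_cast
      rw [show -(k:ℝ) * t / 2 = (k:ℝ) * -t / 2 by ring,
        show -(k:ℝ) * b / 2 = -((k:ℝ) * b / 2) by ring, Real.sin_neg]
      ring
    rw [refl_eq, hb0, neg_zero]
  · exfalso; rw [h0, abs_zero] at ht1; linarith
  · -- positive t
    have htcond : (∑ k ∈ Icc (-q) q, |c k|) < |c q| * Real.exp (t / 2) := by
      have hmle : m ≤ |c q| := min_le_left _ _
      have habs : |t| = t := abs_of_pos hpos
      calc (∑ k ∈ Icc (-q) q, |c k|) = S := hS.symm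
        _ < m * Real.exp (|t| / 2) := key
        _ ≤ |c q| * Real.exp (|t| / 2) :=
            mul_le_mul_of_nonneg_right hmle (Real.exp_pos _).le
        _ = |c q| * Real.exp (t / 2) := by rw [habs]
    obtain ⟨b, hb1, hb2, hb0⟩ := pos_side q hq c hcq t hpos htcond j
    refine ⟨b, hb1, hb2, ?_⟩
    rw [im_eq q c F hF t b, hb0]
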